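/- There exist constants c₁,c₂>0 (depending only on the subordinator S) such that for all t>0 and all s>0, c₁ exp(−c₂ t(H∘σ)(t,s)) ≤ P(S_t ≤ s) ≤ e · exp(−t(H∘σ)(t,s)). -/

import Mathlib

open MeasureTheory Real Set Filter
open scoped ENNReal Topology

/-- Tail of the Lévy measure: `w(r) = ν((r,∞))`. -/
noncomputable def levyTail (ν : Measure ℝ) (r : ℝ) : ℝ := (ν (Set.Ioi r)).toReal

/-- Laplace exponent `φ(λ) = ∫ (1 - e^{-λ s}) ν(ds)`. -/
noncomputable def laplaceExp (ν : Measure ℝ) (lam : ℝ) : ℝ :=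
  ∫ s, (1 - Real.exp (-(lam * s))) ∂ν

/-- Condition (Poly-R₁); (Poly-∞) is the case `R₁ = ⊤`. -/
def PolyCond (ν : Measure ℝ) (R₁ : ℝ≥0∞) (c c' β₁ β₂ : ℝ) : Prop :=
  ∀ r R : ℝ, 0 < r → r ≤ R → ENNReal.ofReal R < R₁ →
    c * (R / r) ^ β₁ ≤ levyTail ν r / levyTail ν R ∧
      levyTail ν r / levyTail ν R ≤ c' * (R / r) ^ β₂

/-- `ν` is the Lévy measure of a driftless subordinator. -/
structure IsLevyMeasure (ν : Measure ℝ) : Prop where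
  supp : ν (Set.Iic 0) = 0
  tail_fin : ∀ r : ℝ, 0 < r → ν (Set.Ioi r) < ⊤
  integ : IntegrableOn (fun s => s) (Set.Ioc (0:ℝ) 1) ν

/-- `μ t` is the law of `S_t` for the driftless subordinator with Lévy measure `ν`. -/
structure IsSubordinatorLaw (ν : Measure ℝ) (μ : ℝ → Measure ℝ) : Prop where
  levy : IsLevyMeasure ν
  prob : ∀ t : ℝ, 0 < t → IsProbabilityMeasure (μ t)
  nonneg : ∀ t : ℝ, 0 < t → μ t (Set.Iio 0) = 0
  laplace : ∀ t lam : ℝ, 0 < t → 0 ≤ lam →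
    (∫ s, Real.exp (-(lam * s)) ∂(μ t)) = Real.exp (-(t * laplaceExp ν lam))

/-- `H(λ) = φ(λ) - λ φ'(λ)`. -/
noncomputable def Hfun (ν : Measure ℝ) (lam : ℝ) : ℝ :=
  laplaceExp ν lam - lam * deriv (laplaceExp ν) lam

/-- `σ(t,s) = (φ')⁻¹(s/t)` if `s/t < φ'(0+)`, and `σ(t,s) = 0` otherwise. -/
def IsSigmaFun (ν : Measure ℝ) (σ : ℝ → ℝ → ℝ) : Prop :=
  ∀ t s : ℝ, 0 < t → 0 < s →
    ((∃ lam : ℝ, 0 < lam ∧ s / t < deriv (laplaceExp ν) lam) →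
      0 < σ t s ∧ deriv (laplaceExp ν) (σ t s) = s / t) ∧
    ((∀ lam : ℝ, 0 < lam → deriv (laplaceExp ν) lam ≤ s / t) → σ t s = 0)

/-- `φInv` is the inverse of the Laplace exponent `φ` on `(0,∞)`. -/
def IsPhiInv (ν : Measure ℝ) (φInv : ℝ → ℝ) : Prop :=
  ∀ u : ℝ, 0 < u → 0 < φInv u ∧ laplaceExp ν (φInv u) = u

/-- `HInv` is the inverse of `H` on `(0,∞)`. -/
def IsHInv (ν : Measure ℝ) (HInv : ℝ → ℝ) : Prop :=
  ∀ u : ℝ, 0 < u → 0 < HInv u ∧ Hfun ν (HInv u) = u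

namespace LTaux

/- pointwise exponential inequalities -/

lemma pw_one_sub_exp_le (y : ℝ) : 1 - Real.exp (-y) ≤ y := by
  have := Real.add_one_le_exp (-y); linarith

lemma pw_mul_exp_le_one {y : ℝ} (hy : 0 ≤ y) : y * Real.exp (-y) ≤ 1 := by
  have h1 := Real.add_one_le_exp y
  have h2 : Real.exp (-y) * Real.exp y = 1 := by
    rw [← Real.exp_add]; simp
  nlinarith [Real.exp_pos (-y), Real.exp_pos y]

lemma pw_key1 {y : ℝ} (hy : 0 ≤ y) : y * Real.exp (-y) ≤ 1 - Real.exp (-y) := by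
  have h1 := Real.add_one_le_exp y
  have h2 : Real.exp (-y) * Real.exp y = 1 := by rw [← Real.exp_add]; simp
  nlinarith [Real.exp_pos (-y)]

lemma pw_key3 {y : ℝ} (hy : 0 ≤ y) : 0 ≤ 1 - Real.exp (-y) - y * Real.exp (-y) := by
  have := pw_key1 hy; linarith

lemma pw_key2 {y : ℝ} (hy : 0 ≤ y) :
    y ^ 2 * Real.exp (-y) ≤ 2 * (1 - Real.exp (-y) - y * Real.exp (-y)) := by
  have htay := Real.sum_le_exp_of_nonneg hy 3
  have h3 : 1 + y + y ^ 2 / 2 ≤ Real.exp y := by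
    simpa [Finset.sum_range_succ, pow_succ, Nat.factorial] using htay
  have h2 : Real.exp (-y) * Real.exp y = 1 := by rw [← Real.exp_add]; simp
  nlinarith [Real.exp_pos (-y)]

lemma pw_concave {a b x : ℝ} (hx : 0 ≤ x) (hab : a ≤ b) :
    Real.exp (-(a * x)) - Real.exp (-(b * x)) ≤ (b - a) * (x * Real.exp (-(a * x))) := by
  have h1 : Real.exp (-(b * x)) = Real.exp (-(a * x)) * Real.exp (-((b - a) * x)) := by
    rw [← Real.exp_add]; ring_nf
  have h2 := pw_one_sub_exp_le ((b - a) * x)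
  have h3 := Real.exp_pos (-(a * x))
  nlinarith [mul_le_mul_of_nonneg_left h2 h3.le]

end LTaux

namespace LTaux

noncomputable def Pf (ν : Measure ℝ) (l : ℝ) : ℝ := ∫ x, x * Real.exp (-(l * x)) ∂ν
noncomputable def Qf (ν : Measure ℝ) (l : ℝ) : ℝ := ∫ x, x ^ 2 * Real.exp (-(l * x)) ∂ν

variable {ν : Measure ℝ}

lemma ae_pos (h : IsLevyMeasure ν) : ∀ᵐ x ∂ν, 0 < x := by
  rw [MeasureTheory.ae_iff]
  have hs : {x : ℝ | ¬ 0 < x} = Set.Iic 0 := by ext x; simp [not_lt]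
  rw [hs]; exact h.supp

lemma master_integrable (h : IsLevyMeasure ν) {f : ℝ → ℝ} {C : ℝ}
    (hm : AEStronglyMeasurable f ν)
    (h1 : ∀ x : ℝ, 0 < x → x ≤ 1 → |f x| ≤ C * x)
    (h2 : ∀ x : ℝ, 1 < x → |f x| ≤ C) : Integrable f ν := by
  have hres : ν.restrict (Set.Ioi 0) = ν :=
    Measure.restrict_eq_self_of_ae_mem (by simpa using ae_pos h)
  rw [← hres]
  have hsplit : Set.Ioi (0:ℝ) = Set.Ioc 0 1 ∪ Set.Ioi 1 :=
    (Set.Ioc_union_Ioi_eq_Ioi zero_le_one).symm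
  rw [hsplit]
  refine MeasureTheory.IntegrableOn.union ?_ ?_
  · refine Integrable.mono' (h.integ.const_mul C) (hm.restrict) ?_
    rw [ae_restrict_iff' measurableSet_Ioc]
    filter_upwards with x hx
    simpa [Real.norm_eq_abs] using h1 x hx.1 hx.2
  · have hfin : ν (Set.Ioi (1:ℝ)) < ⊤ := h.tail_fin 1 one_pos
    refine Integrable.mono' (g := fun _ => C) ?_ hm.restrict ?_
    · exact integrableOn_const hfin.ne
    · rw [ae_restrict_iff' measurableSet_Ioi]
      filter_upwards with x hx
      simpa [Real.norm_eq_abs] using h2 x hx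

lemma integ_one_sub_exp (h : IsLevyMeasure ν) {l : ℝ} (hl : 0 < l) :
    Integrable (fun x => 1 - Real.exp (-(l * x))) ν := by
  refine master_integrable h (C := max 1 l) ((by fun_prop : Continuous _).aestronglyMeasurable) ?_ ?_
  · intro x hx hx1
    have h0 : 0 ≤ l * x := by positivity
    have hle : 1 - Real.exp (-(l * x)) ≤ l * x := pw_one_sub_exp_le _
    have hge : 0 ≤ 1 - Real.exp (-(l * x)) := by
      have := Real.exp_le_one_iff.2 (by linarith : -(l*x) ≤ 0); linarith
    rw [abs_of_nonneg hge]
    calc 1 - Real.exp (-(l * x)) ≤ l * x := hle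
    _ ≤ max 1 l * x := by
        have : l ≤ max 1 l := le_max_right _ _
        nlinarith
  · intro x hx
    have h0 : 0 ≤ l * x := by positivity
    have hge : 0 ≤ 1 - Real.exp (-(l * x)) := by
      have := Real.exp_le_one_iff.2 (by linarith : -(l*x) ≤ 0); linarith
    rw [abs_of_nonneg hge]
    have := Real.exp_pos (-(l * x))
    have : 1 - Real.exp (-(l * x)) ≤ 1 := by linarith
    exact this.trans (le_max_left _ _)

lemma integ_xexp (h : IsLevyMeasure ν) {l : ℝ} (hl : 0 < l) :
    Integrable (fun x => x * Real.exp (-(l * x))) ν := by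
  refine master_integrable h (C := max 1 l⁻¹) ((by fun_prop : Continuous _).aestronglyMeasurable) ?_ ?_
  · intro x hx hx1
    have h0 : 0 ≤ l * x := by positivity
    have he : Real.exp (-(l * x)) ≤ 1 := Real.exp_le_one_iff.2 (by linarith)
    have hge : 0 ≤ x * Real.exp (-(l * x)) := by positivity
    rw [abs_of_nonneg hge]
    have h1 : x * Real.exp (-(l * x)) ≤ x * 1 := by
      exact mul_le_mul_of_nonneg_left he hx.le
    calc x * Real.exp (-(l * x)) ≤ x := by linarith
    _ = 1 * x := (one_mul x).symm
    _ ≤ max 1 l⁻¹ * x := by nlinarith [le_max_left 1 l⁻¹]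
  · intro x hx
    have hx0 : (0:ℝ) < x := lt_trans one_pos hx
    have h0 : 0 ≤ l * x := by positivity
    have hge : 0 ≤ x * Real.exp (-(l * x)) := by positivity
    rw [abs_of_nonneg hge]
    have hkey := pw_mul_exp_le_one h0
    have : x * Real.exp (-(l * x)) ≤ l⁻¹ := by
      rw [← mul_le_mul_iff_right₀ hl]
      calc l * (x * Real.exp (-(l * x))) = (l * x) * Real.exp (-(l * x)) := by ring
      _ ≤ 1 := hkey
      _ = l * l⁻¹ := by field_simp
    exact this.trans (le_max_right _ _)

lemma integ_x2exp (h : IsLevyMeasure ν) {l : ℝ} (hl : 0 < l) :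
    Integrable (fun x => x ^ 2 * Real.exp (-(l * x))) ν := by
  refine master_integrable h (C := max 1 (4 / l ^ 2)) ((by fun_prop : Continuous _).aestronglyMeasurable) ?_ ?_
  · intro x hx hx1
    have h0 : 0 ≤ l * x := by positivity
    have he : Real.exp (-(l * x)) ≤ 1 := Real.exp_le_one_iff.2 (by linarith)
    have hge : 0 ≤ x ^ 2 * Real.exp (-(l * x)) := by positivity
    rw [abs_of_nonneg hge]
    calc x ^ 2 * Real.exp (-(l * x)) ≤ x ^ 2 * 1 := by nlinarith
    _ = x * x := by ring
    _ ≤ 1 * x := by nlinarith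
    _ ≤ max 1 (4 / l ^ 2) * x := by nlinarith [le_max_left 1 (4 / l^2)]
  · intro x hx
    have hx0 : (0:ℝ) < x := lt_trans one_pos hx
    have h0 : 0 ≤ l * x / 2 := by positivity
    have hge : 0 ≤ x ^ 2 * Real.exp (-(l * x)) := by positivity
    rw [abs_of_nonneg hge]
    have hkey := pw_mul_exp_le_one h0
    have hsq : (l * x / 2 * Real.exp (-(l * x / 2))) ^ 2 ≤ 1 := by
      nlinarith [mul_pos (by positivity : (0:ℝ) < l * x / 2) (Real.exp_pos (-(l * x / 2)))]
    have hexp2 : Real.exp (-(l * x / 2)) ^ 2 = Real.exp (-(l * x)) := by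
      rw [sq, ← Real.exp_add]; ring_nf
    have : (l ^ 2 / 4) * (x ^ 2 * Real.exp (-(l * x))) ≤ 1 := by
      calc (l ^ 2 / 4) * (x ^ 2 * Real.exp (-(l * x)))
          = (l * x / 2 * Real.exp (-(l * x / 2))) ^ 2 := by rw [mul_pow, ← hexp2]; ring
      _ ≤ 1 := hsq
    have hl2 : (0:ℝ) < l ^ 2 / 4 := by positivity
    have : x ^ 2 * Real.exp (-(l * x)) ≤ 4 / l ^ 2 := by
      rw [← mul_le_mul_iff_right₀ hl2]
      calc (l ^ 2 / 4) * (x ^ 2 * Real.exp (-(l * x))) ≤ 1 := this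
      _ = (l ^ 2 / 4) * (4 / l ^ 2) := by field_simp
    exact this.trans (le_max_right _ _)

end LTaux

namespace LTaux

variable {ν : Measure ℝ}

lemma Pf_nonneg (h : IsLevyMeasure ν) (l : ℝ) : 0 ≤ Pf ν l :=
  integral_nonneg_of_ae <| by filter_upwards [ae_pos h] with x hx; positivity

lemma Qf_nonneg (h : IsLevyMeasure ν) (l : ℝ) : 0 ≤ Qf ν l :=
  integral_nonneg_of_ae <| by filter_upwards [ae_pos h] with x hx; positivity

lemma mem_ball_half {l u : ℝ} (hl : 0 < l) (hu : u ∈ Metric.ball l (l/2)) : l/2 ≤ u := by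
  have : |u - l| < l/2 := by rwa [Metric.mem_ball, Real.dist_eq] at hu
  have := abs_lt.1 this
  linarith [this.1]

lemma hasDerivAt_laplaceExp (h : IsLevyMeasure ν) {l : ℝ} (hl : 0 < l) :
    HasDerivAt (laplaceExp ν) (Pf ν l) l := by
  have hmain := hasDerivAt_integral_of_dominated_loc_of_deriv_le
    (μ := ν) (F := fun u x => 1 - Real.exp (-(u * x)))
    (F' := fun u x => x * Real.exp (-(u * x))) (x₀ := l)
    (bound := fun x => x * Real.exp (-(l/2 * x))) (s := Metric.ball l (l/2)) (Metric.ball_mem_nhds l (by positivity))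
    (by filter_upwards with u; exact (by fun_prop : Continuous fun x => 1 - Real.exp (-(u * x))).aestronglyMeasurable)
    (integ_one_sub_exp h hl)
    ((by fun_prop : Continuous fun x => x * Real.exp (-(l * x))).aestronglyMeasurable)
    (by
      filter_upwards [ae_pos h] with x hx
      intro u hu
      have hu2 : l/2 ≤ u := mem_ball_half hl hu
      have hle : Real.exp (-(u * x)) ≤ Real.exp (-(l/2 * x)) := by
        apply Real.exp_le_exp.2; nlinarith
      have : 0 ≤ x * Real.exp (-(u * x)) := by positivity
      rw [Real.norm_eq_abs, abs_of_nonneg this]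
      nlinarith)
    (integ_xexp h (by positivity))
    (by
      filter_upwards with x
      intro u hu
      have h1 : HasDerivAt (fun u : ℝ => u * x) x u := hasDerivAt_mul_const x
      have h3 := (show HasDerivAt (fun u : ℝ => -(u * x)) (-x) u from h1.neg).exp
      have h4 := h3.const_sub 1
      convert h4 using 1
      ring)
  exact hmain.2

lemma hasDerivAt_Pf (h : IsLevyMeasure ν) {l : ℝ} (hl : 0 < l) :
    HasDerivAt (Pf ν) (-(Qf ν l)) l := by
  have hmain := hasDerivAt_integral_of_dominated_loc_of_deriv_le
    (μ := ν) (F := fun u x => x * Real.exp (-(u * x)))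
    (F' := fun u x => -(x ^ 2 * Real.exp (-(u * x)))) (x₀ := l)
    (bound := fun x => x ^ 2 * Real.exp (-(l/2 * x))) (s := Metric.ball l (l/2)) (Metric.ball_mem_nhds l (by positivity))
    (by filter_upwards with u; exact (by fun_prop : Continuous fun x => x * Real.exp (-(u * x))).aestronglyMeasurable)
    (integ_xexp h hl)
    ((by fun_prop : Continuous fun x => -(x ^ 2 * Real.exp (-(l * x)))).aestronglyMeasurable)
    (by
      filter_upwards [ae_pos h] with x hx
      intro u hu
      have hu2 : l/2 ≤ u := mem_ball_half hl hu
      have hle : Real.exp (-(u * x)) ≤ Real.exp (-(l/2 * x)) := by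
        apply Real.exp_le_exp.2; nlinarith
      have h0 : 0 ≤ x ^ 2 * Real.exp (-(u * x)) := by positivity
      rw [Real.norm_eq_abs, abs_neg, abs_of_nonneg h0]
      nlinarith [sq_nonneg x])
    (integ_x2exp h (by positivity))
    (by
      filter_upwards with x
      intro u hu
      have h1 : HasDerivAt (fun u : ℝ => u * x) x u := hasDerivAt_mul_const x
      have h3 := (show HasDerivAt (fun u : ℝ => -(u * x)) (-x) u from h1.neg).exp.const_mul x
      exact h3.congr_deriv (by ring))
  have := hmain.2
  rw [integral_neg] at this
  exact this

lemma deriv_laplaceExp (h : IsLevyMeasure ν) {l : ℝ} (hl : 0 < l) :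
    deriv (laplaceExp ν) l = Pf ν l := (hasDerivAt_laplaceExp h hl).deriv

lemma lambdaP_le (h : IsLevyMeasure ν) {l : ℝ} (hl : 0 < l) :
    l * Pf ν l ≤ laplaceExp ν l := by
  rw [Pf, ← integral_const_mul, laplaceExp]
  refine integral_mono_ae ((integ_xexp h hl).const_mul l) (integ_one_sub_exp h hl) ?_
  filter_upwards [ae_pos h] with x hx
  have hk := pw_key1 (show 0 ≤ l * x by positivity)
  calc l * (x * Real.exp (-(l * x))) = (l * x) * Real.exp (-(l * x)) := by ring
  _ ≤ 1 - Real.exp (-(l * x)) := hk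

lemma sqQ_le_two (h : IsLevyMeasure ν) {l : ℝ} (hl : 0 < l) :
    l ^ 2 * Qf ν l ≤ 2 * (laplaceExp ν l - l * Pf ν l) := by
  have hsub : laplaceExp ν l - l * Pf ν l
      = ∫ x, (1 - Real.exp (-(l * x)) - l * (x * Real.exp (-(l * x)))) ∂ν := by
    rw [laplaceExp, Pf, ← integral_const_mul,
      ← integral_sub (integ_one_sub_exp h hl) ((integ_xexp h hl).const_mul l)]
  rw [Qf, ← integral_const_mul, hsub, ← integral_const_mul]
  refine integral_mono_ae ((integ_x2exp h hl).const_mul _)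
    (((integ_one_sub_exp h hl).sub ((integ_xexp h hl).const_mul l)).const_mul 2) ?_
  filter_upwards [ae_pos h] with x hx
  have hk := pw_key2 (show 0 ≤ l * x by positivity)
  calc l ^ 2 * (x ^ 2 * Real.exp (-(l * x))) = (l * x) ^ 2 * Real.exp (-(l * x)) := by ring
  _ ≤ 2 * (1 - Real.exp (-(l * x)) - (l * x) * Real.exp (-(l * x))) := hk
  _ = 2 * (1 - Real.exp (-(l * x)) - l * (x * Real.exp (-(l * x)))) := by ring

lemma concave_le (h : IsLevyMeasure ν) {a b : ℝ} (ha : 0 < a) (hab : a ≤ b) :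
    laplaceExp ν b - laplaceExp ν a ≤ (b - a) * Pf ν a := by
  have hb : 0 < b := lt_of_lt_of_le ha hab
  rw [laplaceExp, laplaceExp,
    ← integral_sub (integ_one_sub_exp h hb) (integ_one_sub_exp h ha), Pf, ← integral_const_mul]
  refine integral_mono_ae ((integ_one_sub_exp h hb).sub (integ_one_sub_exp h ha))
    ((integ_xexp h ha).const_mul _) ?_
  filter_upwards [ae_pos h] with x hx
  have hk := pw_concave hx.le hab
  calc (1 - Real.exp (-(b * x))) - (1 - Real.exp (-(a * x)))
      = Real.exp (-(a * x)) - Real.exp (-(b * x)) := by ring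
  _ ≤ (b - a) * (x * Real.exp (-(a * x))) := hk

end LTaux

namespace LTaux

variable {ν : Measure ℝ}

noncomputable def Htf (ν : Measure ℝ) (l : ℝ) : ℝ := laplaceExp ν l - l * Pf ν l

lemma Htf_nonneg (h : IsLevyMeasure ν) {l : ℝ} (hl : 0 < l) : 0 ≤ Htf ν l := by
  have := lambdaP_le h hl; unfold Htf; linarith

lemma Htf_mono_bound (h : IsLevyMeasure ν) {a b : ℝ} (ha : 0 < a) (hab : a ≤ b) :
    Htf ν b ≤ Htf ν a + b * (Pf ν a - Pf ν b) := by
  have := concave_le h ha hab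
  unfold Htf
  nlinarith [Pf_nonneg h a, Pf_nonneg h b]

lemma continuousAt_Pf (h : IsLevyMeasure ν) {l : ℝ} (hl : 0 < l) :
    ContinuousAt (Pf ν) l := by
  refine continuousAt_of_dominated (μ := ν) (F := fun u x => x * Real.exp (-(u * x)))
    (x₀ := l) (bound := fun x => x * Real.exp (-(l/2 * x)))
    (by filter_upwards with u
        exact (by fun_prop : Continuous fun x => x * Real.exp (-(u * x))).aestronglyMeasurable)
    ?_ (integ_xexp h (by positivity)) ?_
  · filter_upwards [Metric.ball_mem_nhds l (by positivity : (0:ℝ) < l/2)] with u hu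
    filter_upwards [ae_pos h] with x hx
    have hu2 : l/2 ≤ u := mem_ball_half hl hu
    have hle : Real.exp (-(u * x)) ≤ Real.exp (-(l/2 * x)) := by
      apply Real.exp_le_exp.2; nlinarith
    have h0 : 0 ≤ x * Real.exp (-(u * x)) := by positivity
    rw [Real.norm_eq_abs, abs_of_nonneg h0]
    nlinarith
  · filter_upwards with x
    exact (by fun_prop : Continuous fun u : ℝ => x * Real.exp (-(u * x))).continuousAt

lemma continuousAt_Qf (h : IsLevyMeasure ν) {l : ℝ} (hl : 0 < l) :
    ContinuousAt (Qf ν) l := by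
  refine continuousAt_of_dominated (μ := ν) (F := fun u x => x ^ 2 * Real.exp (-(u * x)))
    (x₀ := l) (bound := fun x => x ^ 2 * Real.exp (-(l/2 * x)))
    (by filter_upwards with u
        exact (by fun_prop : Continuous fun x => x ^ 2 * Real.exp (-(u * x))).aestronglyMeasurable)
    ?_ (integ_x2exp h (by positivity)) ?_
  · filter_upwards [Metric.ball_mem_nhds l (by positivity : (0:ℝ) < l/2)] with u hu
    filter_upwards [ae_pos h] with x hx
    have hu2 : l/2 ≤ u := mem_ball_half hl hu
    have hle : Real.exp (-(u * x)) ≤ Real.exp (-(l/2 * x)) := by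
      apply Real.exp_le_exp.2; nlinarith
    have h0 : 0 ≤ x ^ 2 * Real.exp (-(u * x)) := by positivity
    rw [Real.norm_eq_abs, abs_of_nonneg h0]
    nlinarith [sq_nonneg x]
  · filter_upwards with x
    exact (by fun_prop : Continuous fun u : ℝ => x ^ 2 * Real.exp (-(u * x))).continuousAt

lemma continuousAt_laplaceExp (h : IsLevyMeasure ν) {l : ℝ} (hl : 0 < l) :
    ContinuousAt (laplaceExp ν) l := by
  have hbint : Integrable (fun x => min (2 * l * x) 1) ν := by
    refine master_integrable h (C := max 1 (2 * l))
      ((by fun_prop : Continuous fun x : ℝ => min (2 * l * x) 1).aestronglyMeasurable) ?_ ?_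
    · intro x hx hx1
      have h0 : (0:ℝ) ≤ min (2 * l * x) 1 := le_min (by positivity) one_pos.le
      rw [abs_of_nonneg h0]
      calc min (2 * l * x) 1 ≤ 2 * l * x := min_le_left _ _
      _ ≤ max 1 (2 * l) * x := by nlinarith [le_max_right 1 (2 * l)]
    · intro x hx
      have h0 : (0:ℝ) ≤ min (2 * l * x) 1 := le_min (by positivity) one_pos.le
      rw [abs_of_nonneg h0]
      exact (min_le_right _ _).trans (le_max_left _ _)
  refine continuousAt_of_dominated (μ := ν) (F := fun u x => 1 - Real.exp (-(u * x)))
    (x₀ := l) (bound := fun x => min (2 * l * x) 1)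
    (by filter_upwards with u
        exact (by fun_prop : Continuous fun x => 1 - Real.exp (-(u * x))).aestronglyMeasurable)
    ?_ hbint ?_
  · filter_upwards [Metric.ball_mem_nhds l (by positivity : (0:ℝ) < l/2)] with u hu
    filter_upwards [ae_pos h] with x hx
    have hu2 : l/2 ≤ u := mem_ball_half hl hu
    have hu3 : u ≤ 2 * l := by
      have : |u - l| < l/2 := by rwa [Metric.mem_ball, Real.dist_eq] at hu
      have := abs_lt.1 this; linarith [this.2]
    have hu0 : (0:ℝ) < u := lt_of_lt_of_le (by positivity) hu2
    have h0 : 0 ≤ u * x := mul_nonneg hu0.le hx.le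
    have hge : 0 ≤ 1 - Real.exp (-(u * x)) := by
      have := Real.exp_le_one_iff.2 (by linarith : -(u * x) ≤ 0); linarith
    rw [Real.norm_eq_abs, abs_of_nonneg hge]
    refine le_min ?_ ?_
    · have := pw_one_sub_exp_le (u * x); nlinarith
    · have := Real.exp_pos (-(u * x)); linarith
  · filter_upwards with x
    exact (by fun_prop : Continuous fun u : ℝ => 1 - Real.exp (-(u * x))).continuousAt

lemma continuousAt_Htf (h : IsLevyMeasure ν) {l : ℝ} (hl : 0 < l) :
    ContinuousAt (Htf ν) l := by
  have := (continuousAt_laplaceExp h hl).sub (continuousAt_id.mul (continuousAt_Pf h hl))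
  exact this

lemma tendsto_Pf_atTop (h : IsLevyMeasure ν) : Tendsto (Pf ν) atTop (𝓝 0) := by
  have hmain := tendsto_integral_filter_of_dominated_convergence (μ := ν)
    (F := fun u x => x * Real.exp (-(u * x))) (f := fun _ => (0:ℝ))
    (bound := fun x => x * Real.exp (-(1 * x)))
    (by filter_upwards with u
        exact (by fun_prop : Continuous fun x => x * Real.exp (-(u * x))).aestronglyMeasurable)
    (by
      filter_upwards [eventually_ge_atTop (1:ℝ)] with u hu
      filter_upwards [ae_pos h] with x hx
      have hle : Real.exp (-(u * x)) ≤ Real.exp (-(1 * x)) := by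
        apply Real.exp_le_exp.2; nlinarith
      have h0 : 0 ≤ x * Real.exp (-(u * x)) := by positivity
      rw [Real.norm_eq_abs, abs_of_nonneg h0]
      nlinarith)
    (integ_xexp h one_pos)
    (by
      filter_upwards [ae_pos h] with x hx
      have h1 : Tendsto (fun u : ℝ => u * x) atTop atTop :=
        Tendsto.atTop_mul_const hx tendsto_id
      have h2 : Tendsto (fun u : ℝ => -(u * x)) atTop atBot := tendsto_neg_atBot_iff.2 h1
      have h3 := Real.tendsto_exp_atBot.comp h2
      have h4 := h3.const_mul x
      simpa using h4)
  exact (by simpa using hmain : Tendsto (fun u => ∫ x, x * Real.exp (-(u * x)) ∂ν) atTop (𝓝 0))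

lemma tendsto_Qf_atTop (h : IsLevyMeasure ν) : Tendsto (Qf ν) atTop (𝓝 0) := by
  have hmain := tendsto_integral_filter_of_dominated_convergence (μ := ν)
    (F := fun u x => x ^ 2 * Real.exp (-(u * x))) (f := fun _ => (0:ℝ))
    (bound := fun x => x ^ 2 * Real.exp (-(1 * x)))
    (by filter_upwards with u
        exact (by fun_prop : Continuous fun x => x ^ 2 * Real.exp (-(u * x))).aestronglyMeasurable)
    (by
      filter_upwards [eventually_ge_atTop (1:ℝ)] with u hu
      filter_upwards [ae_pos h] with x hx
      have hle : Real.exp (-(u * x)) ≤ Real.exp (-(1 * x)) := by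
        apply Real.exp_le_exp.2; nlinarith
      have h0 : 0 ≤ x ^ 2 * Real.exp (-(u * x)) := by positivity
      rw [Real.norm_eq_abs, abs_of_nonneg h0]
      nlinarith [sq_nonneg x])
    (integ_x2exp h one_pos)
    (by
      filter_upwards [ae_pos h] with x hx
      have h1 : Tendsto (fun u : ℝ => u * x) atTop atTop :=
        Tendsto.atTop_mul_const hx tendsto_id
      have h2 : Tendsto (fun u : ℝ => -(u * x)) atTop atBot := tendsto_neg_atBot_iff.2 h1
      have h3 := Real.tendsto_exp_atBot.comp h2
      have h4 := h3.const_mul (x ^ 2)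
      simpa using h4)
  exact (by simpa using hmain : Tendsto (fun u => ∫ x, x ^ 2 * Real.exp (-(u * x)) ∂ν) atTop (𝓝 0))

lemma Htf_eq (h : IsLevyMeasure ν) {l : ℝ} (hl : 0 < l) :
    Htf ν l = ∫ x, (1 - Real.exp (-(l * x)) - l * (x * Real.exp (-(l * x)))) ∂ν := by
  rw [Htf, laplaceExp, Pf, ← integral_const_mul,
    ← integral_sub (integ_one_sub_exp h hl) ((integ_xexp h hl).const_mul l)]

lemma tendsto_Htf_zero (h : IsLevyMeasure ν) :
    Tendsto (fun n : ℕ => Htf ν (1 / ((n : ℝ) + 1))) atTop (𝓝 0) := by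
  have hpos : ∀ n : ℕ, (0:ℝ) < 1 / ((n : ℝ) + 1) := fun n => by positivity
  have hmain := tendsto_integral_filter_of_dominated_convergence (μ := ν)
    (F := fun (n : ℕ) x => 1 - Real.exp (-(1 / ((n : ℝ) + 1) * x))
      - 1 / ((n : ℝ) + 1) * (x * Real.exp (-(1 / ((n : ℝ) + 1) * x))))
    (f := fun _ => (0:ℝ)) (bound := fun x => min x 1)
    (by filter_upwards with n
        exact (by fun_prop : Continuous fun x : ℝ => 1 - Real.exp (-(1 / ((n : ℝ) + 1) * x))
          - 1 / ((n : ℝ) + 1) * (x * Real.exp (-(1 / ((n : ℝ) + 1) * x)))).aestronglyMeasurable)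
    (by
      filter_upwards with n
      filter_upwards [ae_pos h] with x hx
      set l : ℝ := 1 / ((n : ℝ) + 1) with hldef
      have hl : 0 < l := hpos n
      have hl1 : l ≤ 1 := by
        rw [hldef]
        rw [div_le_one (by positivity)]
        simp
      have h0 : 0 ≤ l * x := by positivity
      have hge : 0 ≤ 1 - Real.exp (-(l * x)) - l * (x * Real.exp (-(l * x))) := by
        have := pw_key3 h0
        calc (0:ℝ) ≤ 1 - Real.exp (-(l * x)) - (l * x) * Real.exp (-(l * x)) := this
        _ = 1 - Real.exp (-(l * x)) - l * (x * Real.exp (-(l * x))) := by ring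
      rw [Real.norm_eq_abs, abs_of_nonneg hge]
      refine le_min ?_ ?_
      · have h1 := pw_one_sub_exp_le (l * x)
        have h2 : 0 ≤ l * (x * Real.exp (-(l * x))) := by positivity
        nlinarith
      · have h2 : 0 ≤ l * (x * Real.exp (-(l * x))) := by positivity
        have := Real.exp_pos (-(l * x))
        linarith)
    (by
      refine master_integrable h (C := 1)
        ((by fun_prop : Continuous fun x : ℝ => min x 1).aestronglyMeasurable) ?_ ?_
      · intro x hx hx1
        have h0 : (0:ℝ) ≤ min x 1 := le_min hx.le one_pos.le
        rw [abs_of_nonneg h0, one_mul]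
        exact min_le_left _ _
      · intro x hx
        have h0 : (0:ℝ) ≤ min x 1 := le_min (by linarith) one_pos.le
        rw [abs_of_nonneg h0]
        exact min_le_right _ _)
    (by
      filter_upwards [ae_pos h] with x hx
      have hc : Continuous fun l : ℝ =>
          1 - Real.exp (-(l * x)) - l * (x * Real.exp (-(l * x))) := by fun_prop
      have h0 : Tendsto (fun n : ℕ => 1 / ((n : ℝ) + 1)) atTop (𝓝 0) :=
        tendsto_one_div_add_atTop_nhds_zero_nat
      have := (hc.tendsto 0).comp h0
      simpa [Function.comp_def] using this)
  have : (fun n : ℕ => Htf ν (1 / ((n : ℝ) + 1)))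
      = fun n : ℕ => ∫ x, (1 - Real.exp (-(1 / ((n : ℝ) + 1) * x))
        - 1 / ((n : ℝ) + 1) * (x * Real.exp (-(1 / ((n : ℝ) + 1) * x)))) ∂ν := by
    funext n; exact Htf_eq h (hpos n)
  rw [this]
  simpa using hmain

end LTaux

namespace LTaux

variable {ν : Measure ℝ} {μ : ℝ → Measure ℝ} {t : ℝ}

lemma pw_xexp_le {l x : ℝ} (hl : 0 < l) (hx : 0 ≤ x) :
    x * Real.exp (-(l * x)) ≤ 2 / l := by
  have hkey := pw_mul_exp_le_one (mul_nonneg hl.le hx)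
  rw [← mul_le_mul_iff_right₀ hl]
  calc l * (x * Real.exp (-(l * x))) = (l * x) * Real.exp (-(l * x)) := by ring
  _ ≤ 1 := hkey
  _ ≤ l * (2 / l) := by rw [mul_div_cancel₀]; norm_num; exact hl.ne'

lemma pw_x2exp_le {l x : ℝ} (hl : 0 < l) (hx : 0 ≤ x) :
    x ^ 2 * Real.exp (-(l * x)) ≤ 8 / l ^ 2 := by
  have h0 : 0 ≤ l * x / 2 := by positivity
  have hkey := pw_mul_exp_le_one h0
  have hexp2 : Real.exp (-(l * x / 2)) ^ 2 = Real.exp (-(l * x)) := by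
    rw [sq, ← Real.exp_add]; ring_nf
  have hsq : (l * x / 2 * Real.exp (-(l * x / 2))) ^ 2 ≤ 1 := by
    nlinarith [mul_nonneg h0 (Real.exp_pos (-(l * x / 2))).le]
  have hl2 : (0:ℝ) < l ^ 2 / 4 := by positivity
  have hmain : (l ^ 2 / 4) * (x ^ 2 * Real.exp (-(l * x))) ≤ 1 := by
    calc (l ^ 2 / 4) * (x ^ 2 * Real.exp (-(l * x)))
        = (l * x / 2 * Real.exp (-(l * x / 2))) ^ 2 := by rw [mul_pow, ← hexp2]; ring
    _ ≤ 1 := hsq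
  rw [← mul_le_mul_iff_right₀ hl2]
  calc (l ^ 2 / 4) * (x ^ 2 * Real.exp (-(l * x))) ≤ 1 := hmain
  _ ≤ (l ^ 2 / 4) * (8 / l ^ 2) := by
      rw [show l ^ 2 / 4 * (8 / l ^ 2) = 2 by field_simp; ring]; norm_num

lemma mu_ae_nonneg (hsub : IsSubordinatorLaw ν μ) (ht : 0 < t) :
    ∀ᵐ x ∂(μ t), 0 ≤ x := by
  rw [MeasureTheory.ae_iff]
  have hs : {x : ℝ | ¬ 0 ≤ x} = Set.Iio 0 := by ext x; simp [not_le]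
  rw [hs]; exact hsub.nonneg t ht

lemma integ_mu_exp (hsub : IsSubordinatorLaw ν μ) (ht : 0 < t) {l : ℝ} (hl : 0 ≤ l) :
    Integrable (fun x => Real.exp (-(l * x))) (μ t) := by
  haveI := hsub.prob t ht
  refine Integrable.mono' (integrable_const 1)
    ((by fun_prop : Continuous fun x : ℝ => Real.exp (-(l * x))).aestronglyMeasurable) ?_
  filter_upwards [mu_ae_nonneg hsub ht] with x hx
  rw [Real.norm_eq_abs, abs_of_nonneg (Real.exp_pos _).le]
  exact Real.exp_le_one_iff.2 (by nlinarith)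

lemma integ_mu_xexp (hsub : IsSubordinatorLaw ν μ) (ht : 0 < t) {l : ℝ} (hl : 0 < l) :
    Integrable (fun x => x * Real.exp (-(l * x))) (μ t) := by
  haveI := hsub.prob t ht
  refine Integrable.mono' (integrable_const (2 / l))
    ((by fun_prop : Continuous fun x : ℝ => x * Real.exp (-(l * x))).aestronglyMeasurable) ?_
  filter_upwards [mu_ae_nonneg hsub ht] with x hx
  rw [Real.norm_eq_abs, abs_of_nonneg (by positivity)]
  exact pw_xexp_le hl hx

lemma integ_mu_x2exp (hsub : IsSubordinatorLaw ν μ) (ht : 0 < t) {l : ℝ} (hl : 0 < l) :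
    Integrable (fun x => x ^ 2 * Real.exp (-(l * x))) (μ t) := by
  haveI := hsub.prob t ht
  refine Integrable.mono' (integrable_const (8 / l ^ 2))
    ((by fun_prop : Continuous fun x : ℝ => x ^ 2 * Real.exp (-(l * x))).aestronglyMeasurable) ?_
  filter_upwards [mu_ae_nonneg hsub ht] with x hx
  rw [Real.norm_eq_abs, abs_of_nonneg (by positivity)]
  exact pw_x2exp_le hl hx

lemma muA_eq (hsub : IsSubordinatorLaw ν μ) (ht : 0 < t) {l : ℝ} (hl : 0 < l) :
    ∫ x, x * Real.exp (-(l * x)) ∂(μ t)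
      = t * Pf ν l * Real.exp (-(t * laplaceExp ν l)) := by
  haveI := hsub.prob t ht
  have hlev := hsub.levy
  have hG : HasDerivAt (fun u => ∫ x, Real.exp (-(u * x)) ∂(μ t))
      (∫ x, -(x * Real.exp (-(l * x))) ∂(μ t)) l := by
    refine (hasDerivAt_integral_of_dominated_loc_of_deriv_le (s := Metric.ball l (l/2))
      (F := fun u x => Real.exp (-(u * x))) (F' := fun u x => -(x * Real.exp (-(u * x))))
      (bound := fun _ => 4 / l) (Metric.ball_mem_nhds l (by positivity))
      (by filter_upwards with u
          exact (by fun_prop : Continuous fun x : ℝ => Real.exp (-(u * x))).aestronglyMeasurable)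
      (integ_mu_exp hsub ht hl.le)
      ((by fun_prop : Continuous fun x : ℝ => -(x * Real.exp (-(l * x)))).aestronglyMeasurable)
      ?_ (integrable_const _) ?_).2
    · filter_upwards [mu_ae_nonneg hsub ht] with x hx
      intro u hu
      have hu2 : l/2 ≤ u := mem_ball_half hl hu
      have hu0 : (0:ℝ) < u := lt_of_lt_of_le (by positivity) hu2
      rw [Real.norm_eq_abs, abs_neg, abs_of_nonneg (by positivity)]
      have h1 : x * Real.exp (-(u * x)) ≤ x * Real.exp (-(l/2 * x)) := by
        have : Real.exp (-(u * x)) ≤ Real.exp (-(l/2 * x)) := by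
          apply Real.exp_le_exp.2; nlinarith
        nlinarith
      have h2 := pw_xexp_le (by positivity : (0:ℝ) < l/2) hx
      calc x * Real.exp (-(u * x)) ≤ x * Real.exp (-(l/2 * x)) := h1
      _ ≤ 2 / (l/2) := h2
      _ = 4 / l := by field_simp; ring
    · filter_upwards with x
      intro u hu
      have h1 : HasDerivAt (fun u : ℝ => u * x) x u := hasDerivAt_mul_const x
      have h3 := (show HasDerivAt (fun u : ℝ => -(u * x)) (-x) u from h1.neg).exp
      exact h3.congr_deriv (by ring)
  have hR : HasDerivAt (fun u => Real.exp (-(t * laplaceExp ν u)))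
      (Real.exp (-(t * laplaceExp ν l)) * (-(t * Pf ν l))) l :=
    (((hasDerivAt_laplaceExp hlev hl).const_mul t).neg).exp
  have hev : (fun u => ∫ x, Real.exp (-(u * x)) ∂(μ t))
      =ᶠ[𝓝 l] (fun u => Real.exp (-(t * laplaceExp ν u))) := by
    filter_upwards [Ioi_mem_nhds hl] with u hu
    exact hsub.laplace t u ht (le_of_lt hu)
  have heq := hG.unique (hR.congr_of_eventuallyEq hev)
  rw [integral_neg] at heq
  linear_combination -heq

lemma muB_eq (hsub : IsSubordinatorLaw ν μ) (ht : 0 < t) {l : ℝ} (hl : 0 < l) :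
    ∫ x, x ^ 2 * Real.exp (-(l * x)) ∂(μ t)
      = (t * Qf ν l + (t * Pf ν l) ^ 2) * Real.exp (-(t * laplaceExp ν l)) := by
  haveI := hsub.prob t ht
  have hlev := hsub.levy
  have hA : HasDerivAt (fun u => ∫ x, x * Real.exp (-(u * x)) ∂(μ t))
      (∫ x, -(x ^ 2 * Real.exp (-(l * x))) ∂(μ t)) l := by
    refine (hasDerivAt_integral_of_dominated_loc_of_deriv_le (s := Metric.ball l (l/2))
      (F := fun u x => x * Real.exp (-(u * x)))
      (F' := fun u x => -(x ^ 2 * Real.exp (-(u * x))))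
      (bound := fun _ => 32 / l ^ 2) (Metric.ball_mem_nhds l (by positivity))
      (by filter_upwards with u
          exact (by fun_prop : Continuous fun x : ℝ => x * Real.exp (-(u * x))).aestronglyMeasurable)
      (integ_mu_xexp hsub ht hl)
      ((by fun_prop : Continuous fun x : ℝ => -(x ^ 2 * Real.exp (-(l * x)))).aestronglyMeasurable)
      ?_ (integrable_const _) ?_).2
    · filter_upwards [mu_ae_nonneg hsub ht] with x hx
      intro u hu
      have hu2 : l/2 ≤ u := mem_ball_half hl hu
      rw [Real.norm_eq_abs, abs_neg, abs_of_nonneg (by positivity)]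
      have h1 : x ^ 2 * Real.exp (-(u * x)) ≤ x ^ 2 * Real.exp (-(l/2 * x)) := by
        have : Real.exp (-(u * x)) ≤ Real.exp (-(l/2 * x)) := by
          apply Real.exp_le_exp.2; nlinarith
        nlinarith [sq_nonneg x]
      have h2 := pw_x2exp_le (by positivity : (0:ℝ) < l/2) hx
      calc x ^ 2 * Real.exp (-(u * x)) ≤ x ^ 2 * Real.exp (-(l/2 * x)) := h1
      _ ≤ 8 / (l/2) ^ 2 := h2
      _ = 32 / l ^ 2 := by field_simp; ring
    · filter_upwards with x
      intro u hu
      have h1 : HasDerivAt (fun u : ℝ => u * x) x u := hasDerivAt_mul_const x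
      have h3 := (show HasDerivAt (fun u : ℝ => -(u * x)) (-x) u from h1.neg).exp.const_mul x
      exact h3.congr_deriv (by ring)
  have hRP : HasDerivAt (fun u => t * Pf ν u) (t * -(Qf ν l)) l :=
    (hasDerivAt_Pf hlev hl).const_mul t
  have hRE : HasDerivAt (fun u => Real.exp (-(t * laplaceExp ν u)))
      (Real.exp (-(t * laplaceExp ν l)) * (-(t * Pf ν l))) l :=
    (((hasDerivAt_laplaceExp hlev hl).const_mul t).neg).exp
  have hR := hRP.mul hRE
  have hev : (fun u => ∫ x, x * Real.exp (-(u * x)) ∂(μ t))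
      =ᶠ[𝓝 l] (fun u => t * Pf ν u * Real.exp (-(t * laplaceExp ν u))) := by
    filter_upwards [Ioi_mem_nhds hl] with u hu
    exact muA_eq hsub ht hu
  have heq := hA.unique (hR.congr_of_eventuallyEq hev)
  rw [integral_neg] at heq
  linear_combination -heq

lemma mu_var_eq (hsub : IsSubordinatorLaw ν μ) (ht : 0 < t) {l : ℝ} (hl : 0 < l) :
    ∫ x, (x - t * Pf ν l) ^ 2 * Real.exp (-(l * x)) ∂(μ t)
      = t * Qf ν l * Real.exp (-(t * laplaceExp ν l)) := by
  haveI := hsub.prob t ht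
  set m := t * Pf ν l with hm
  have h1 := integ_mu_x2exp hsub ht hl
  have h2 := (integ_mu_xexp hsub ht hl).const_mul (2 * m)
  have h3 := (integ_mu_exp hsub ht hl.le).const_mul (m ^ 2)
  have hfun : (fun x => (x - m) ^ 2 * Real.exp (-(l * x))) = fun x =>
      (x ^ 2 * Real.exp (-(l * x)) - 2 * m * (x * Real.exp (-(l * x))))
        + m ^ 2 * Real.exp (-(l * x)) := by
    funext x; ring
  have h12 : Integrable (fun x => x ^ 2 * Real.exp (-(l * x))
      - 2 * m * (x * Real.exp (-(l * x)))) (μ t) := h1.sub h2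
  rw [hfun, integral_add h12 h3]
  rw [integral_sub h1 h2, integral_const_mul, integral_const_mul, muA_eq hsub ht hl,
    muB_eq hsub ht hl, hsub.laplace t l ht hl.le]
  ring

end LTaux

namespace LTaux

variable {ν : Measure ℝ} {μ : ℝ → Measure ℝ} {t : ℝ}

lemma main_est (hsub : IsSubordinatorLaw ν μ) (ht : 0 < t) {l s : ℝ} (hl : 0 < l)
    (hQ : 0 < Qf ν l) (hcond : t * Pf ν l + 2 * Real.sqrt (t * Qf ν l) ≤ s) :
    (3/4) * Real.exp (-(t * Htf ν l) - 2 * l * Real.sqrt (t * Qf ν l))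
      ≤ (μ t (Set.Iic s)).toReal := by
  haveI := hsub.prob t ht
  have hq : 0 < t * Qf ν l := mul_pos ht hQ
  set m : ℝ := t * Pf ν l with hm
  set q : ℝ := t * Qf ν l with hqdef
  set d : ℝ := 2 * Real.sqrt q with hd
  have hdpos : 0 < d := by rw [hd]; positivity
  have hd2 : d ^ 2 = 4 * q := by
    rw [hd, mul_pow, Real.sq_sqrt hq.le]; ring
  set E : ℝ := Real.exp (-(t * laplaceExp ν l)) with hE
  have hF : ∫ x, Real.exp (-(l * x)) ∂(μ t) = E := hsub.laplace t l ht hl.le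
  have hint_exp := integ_mu_exp hsub ht hl.le
  have hvar_int : Integrable (fun x => (x - m) ^ 2 * Real.exp (-(l * x))) (μ t) := by
    have h1 := integ_mu_x2exp hsub ht hl
    have h2 := (integ_mu_xexp hsub ht hl).const_mul (2 * m)
    have h3 := (integ_mu_exp hsub ht hl.le).const_mul (m ^ 2)
    have h12 : Integrable (fun x => x ^ 2 * Real.exp (-(l * x))
        - 2 * m * (x * Real.exp (-(l * x)))) (μ t) := h1.sub h2
    have h123 : Integrable (fun x => (x ^ 2 * Real.exp (-(l * x))
        - 2 * m * (x * Real.exp (-(l * x)))) + m ^ 2 * Real.exp (-(l * x))) (μ t) := h12.add h3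
    refine h123.congr ?_
    filter_upwards with x
    ring
  have hvar_val : ∫ x, (x - m) ^ 2 * Real.exp (-(l * x)) ∂(μ t) = q * E :=
    mu_var_eq hsub ht hl
  set A : Set ℝ := Set.Icc (m - d) (m + d) with hA
  have hAmeas : MeasurableSet A := measurableSet_Icc
  have hsplit := integral_add_compl hAmeas hint_exp
  -- tail bound
  have htail : ∫ x in Aᶜ, Real.exp (-(l * x)) ∂(μ t) ≤ E / 4 := by
    have hmono : ∫ x in Aᶜ, Real.exp (-(l * x)) ∂(μ t)
        ≤ ∫ x in Aᶜ, (1 / d ^ 2) * ((x - m) ^ 2 * Real.exp (-(l * x))) ∂(μ t) := by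
      refine setIntegral_mono_on (hint_exp.integrableOn)
        ((hvar_int.const_mul _).integrableOn) hAmeas.compl ?_
      intro x hx
      have hx' : ¬ (m - d ≤ x ∧ x ≤ m + d) := by
        simpa [hA, Set.mem_Icc] using hx
      have hxd : d ^ 2 ≤ (x - m) ^ 2 := by
        rcases not_and_or.1 hx' with h | h
        · push_neg at h; nlinarith
        · push_neg at h; nlinarith
      have hepos := Real.exp_pos (-(l * x))
      have hd2pos : (0:ℝ) < d ^ 2 := by positivity
      have : Real.exp (-(l * x)) * 1 ≤ Real.exp (-(l * x)) * ((x - m) ^ 2 / d ^ 2) := by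
        refine mul_le_mul_of_nonneg_left ?_ hepos.le
        rw [le_div_iff₀ hd2pos]; linarith
      calc Real.exp (-(l * x)) = Real.exp (-(l * x)) * 1 := by ring
      _ ≤ Real.exp (-(l * x)) * ((x - m) ^ 2 / d ^ 2) := this
      _ = (1 / d ^ 2) * ((x - m) ^ 2 * Real.exp (-(l * x))) := by ring
    have hle2 : ∫ x in Aᶜ, (1 / d ^ 2) * ((x - m) ^ 2 * Real.exp (-(l * x))) ∂(μ t)
        ≤ ∫ x, (1 / d ^ 2) * ((x - m) ^ 2 * Real.exp (-(l * x))) ∂(μ t) := by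
      refine setIntegral_le_integral (hvar_int.const_mul _) ?_
      filter_upwards with x
      positivity
    have hval : ∫ x, (1 / d ^ 2) * ((x - m) ^ 2 * Real.exp (-(l * x))) ∂(μ t) = E / 4 := by
      rw [integral_const_mul, hvar_val, hd2]
      field_simp
    linarith
  have hJ : (3/4) * E ≤ ∫ x in A, Real.exp (-(l * x)) ∂(μ t) := by
    have := hsplit
    rw [hF] at this
    linarith
  -- measure lower bound
  have hstep2 : ∫ x in A, Real.exp (-(l * x)) ∂(μ t)
      ≤ (μ t A).toReal * Real.exp (-(l * (m - d))) := by
    have hmono2 : ∫ x in A, Real.exp (-(l * x)) ∂(μ t)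
        ≤ ∫ _x in A, Real.exp (-(l * (m - d))) ∂(μ t) := by
      refine setIntegral_mono_on (hint_exp.integrableOn)
        (integrableOn_const) hAmeas ?_
      intro x hx
      have hx1 : m - d ≤ x := hx.1
      exact Real.exp_le_exp.2 (by nlinarith)
    rw [setIntegral_const] at hmono2
    simpa [smul_eq_mul, Measure.real] using hmono2
  have hApos : (3/4) * E * Real.exp (l * (m - d)) ≤ (μ t A).toReal := by
    have hmul : Real.exp (-(l * (m - d))) * Real.exp (l * (m - d)) = 1 := by
      rw [← Real.exp_add]; simp
    have h5 := hJ.trans hstep2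
    calc (3/4) * E * Real.exp (l * (m - d))
        ≤ ((μ t A).toReal * Real.exp (-(l * (m - d)))) * Real.exp (l * (m - d)) :=
          mul_le_mul_of_nonneg_right h5 (Real.exp_pos _).le
    _ = (μ t A).toReal * (Real.exp (-(l * (m - d))) * Real.exp (l * (m - d))) := by ring
    _ = (μ t A).toReal := by rw [hmul, mul_one]
  have hsubset : A ⊆ Set.Iic s := by
    intro x hx
    have := hx.2
    simp only [Set.mem_Iic]
    linarith
  have hmono3 : (μ t A).toReal ≤ (μ t (Set.Iic s)).toReal :=
    ENNReal.toReal_mono (measure_ne_top _ _) (measure_mono hsubset)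
  have hfinal : (3/4) * E * Real.exp (l * (m - d))
      = (3/4) * Real.exp (-(t * Htf ν l) - 2 * l * Real.sqrt q) := by
    rw [hE, mul_assoc, ← Real.exp_add]
    congr 2
    simp only [Htf, hm, hd]
    ring
  rw [← hfinal]
  exact hApos.trans hmono3

lemma main_est2 (hsub : IsSubordinatorLaw ν μ) (ht : 0 < t) {l s : ℝ} (hl : 0 < l)
    (hQ : 0 < Qf ν l) (hcond : t * Pf ν l + 2 * Real.sqrt (t * Qf ν l) ≤ s) :
    (3/4) * Real.exp (-(2 * (t * Htf ν l)) - 2) ≤ (μ t (Set.Iic s)).toReal := by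
  have hlev := hsub.levy
  have hmain := main_est hsub ht hl hQ hcond
  set h : ℝ := t * Htf ν l with hh
  have hH0 : 0 ≤ h := mul_nonneg ht.le (Htf_nonneg hlev hl)
  have hth : l ^ 2 * (t * Qf ν l) ≤ 2 * h := by
    have := sqQ_le_two hlev hl
    have h2 : l ^ 2 * Qf ν l ≤ 2 * Htf ν l := by
      simpa [Htf] using this
    nlinarith
  have hsqrt : 2 * l * Real.sqrt (t * Qf ν l) ≤ h + 2 := by
    have h1 : l * Real.sqrt (t * Qf ν l) = Real.sqrt (l ^ 2 * (t * Qf ν l)) := by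
      rw [Real.sqrt_mul (sq_nonneg l), Real.sqrt_sq hl.le]
    have h2 : Real.sqrt (l ^ 2 * (t * Qf ν l)) ≤ Real.sqrt (((h + 2) / 2) ^ 2) := by
      apply Real.sqrt_le_sqrt
      nlinarith [sq_nonneg (h - 2), hth]
    rw [Real.sqrt_sq (by linarith : (0:ℝ) ≤ (h + 2) / 2)] at h2
    rw [mul_assoc, h1]
    linarith
  have hexp : Real.exp (-(2 * h) - 2)
      ≤ Real.exp (-h - 2 * l * Real.sqrt (t * Qf ν l)) := by
    apply Real.exp_le_exp.2
    linarith
  calc (3/4) * Real.exp (-(2 * h) - 2)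
      ≤ (3/4) * Real.exp (-h - 2 * l * Real.sqrt (t * Qf ν l)) := by linarith
  _ = (3/4) * Real.exp (-(t * Htf ν l) - 2 * l * Real.sqrt (t * Qf ν l)) := by rw [hh]
  _ ≤ _ := hmain

lemma upper_est (hsub : IsSubordinatorLaw ν μ) (ht : 0 < t) {l s : ℝ} (hl : 0 ≤ l)
    (hs : 0 < s) :
    (μ t (Set.Iic s)).toReal ≤ Real.exp (l * s - t * laplaceExp ν l) := by
  haveI := hsub.prob t ht
  have hsub1 : μ t (Set.Iic s) ≤ μ t (Set.Icc 0 s) := by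
    have hss : Set.Iic s ⊆ Set.Iio 0 ∪ Set.Icc 0 s := by
      intro x hx
      rcases lt_or_ge x 0 with h | h
      · exact Or.inl h
      · exact Or.inr ⟨h, hx⟩
    calc μ t (Set.Iic s) ≤ μ t (Set.Iio 0 ∪ Set.Icc 0 s) := measure_mono hss
    _ ≤ μ t (Set.Iio 0) + μ t (Set.Icc 0 s) := measure_union_le _ _
    _ = μ t (Set.Icc 0 s) := by rw [hsub.nonneg t ht, zero_add]
  have h1 : (μ t (Set.Iic s)).toReal ≤ (μ t (Set.Icc 0 s)).toReal :=
    ENNReal.toReal_mono (measure_ne_top _ _) hsub1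
  have h2 : (μ t (Set.Icc 0 s)).toReal = ∫ _x in Set.Icc (0:ℝ) s, (1:ℝ) ∂(μ t) := by
    rw [setIntegral_const]; simp [Measure.real]
  have h3 : ∫ _x in Set.Icc (0:ℝ) s, (1:ℝ) ∂(μ t)
      ≤ ∫ x in Set.Icc (0:ℝ) s, Real.exp (l * s) * Real.exp (-(l * x)) ∂(μ t) := by
    refine setIntegral_mono_on (integrableOn_const)
      (((integ_mu_exp hsub ht hl).const_mul _).integrableOn) measurableSet_Icc ?_
    intro x hx
    rw [← Real.exp_add]
    exact Real.one_le_exp (by nlinarith [hx.1, hx.2])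
  have h4 : ∫ x in Set.Icc (0:ℝ) s, Real.exp (l * s) * Real.exp (-(l * x)) ∂(μ t)
      ≤ ∫ x, Real.exp (l * s) * Real.exp (-(l * x)) ∂(μ t) := by
    refine setIntegral_le_integral ((integ_mu_exp hsub ht hl).const_mul _) ?_
    filter_upwards with x
    positivity
  have h5 : ∫ x, Real.exp (l * s) * Real.exp (-(l * x)) ∂(μ t)
      = Real.exp (l * s - t * laplaceExp ν l) := by
    rw [integral_const_mul, hsub.laplace t l ht hl, ← Real.exp_add]
    ring_nf
  linarith

end LTaux

set_option maxHeartbeats 1000000 in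
theorem left_tail_estimate_aux
    (ν : Measure ℝ) (μ : ℝ → Measure ℝ) (hsub : IsSubordinatorLaw ν μ)
    (σ : ℝ → ℝ → ℝ) (hσ : IsSigmaFun ν σ) :
    ∃ c₁ c₂ : ℝ, 0 < c₁ ∧ 0 < c₂ ∧
      ∀ t s : ℝ, 0 < t → 0 < s →
        c₁ * Real.exp (-(c₂ * (t * Hfun ν (σ t s)))) ≤ (μ t (Set.Iic s)).toReal ∧
        (μ t (Set.Iic s)).toReal ≤ Real.exp 1 * Real.exp (-(t * Hfun ν (σ t s))) := by
  classical
  open LTaux in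
  refine ⟨Real.exp (-23), 4, Real.exp_pos _, by norm_num, ?_⟩
  intro t s ht hs
  have hlev := hsub.levy
  haveI := hsub.prob t ht
  have hexp_neg_one : Real.exp (-1 : ℝ) ≤ 3/4 := by
    have h2 : (2:ℝ) ≤ Real.exp 1 := by
      have := Real.add_one_le_exp (1:ℝ); linarith
    have hmul : Real.exp (-1 : ℝ) * Real.exp 1 = 1 := by rw [← Real.exp_add]; simp
    nlinarith [Real.exp_pos (-1 : ℝ)]
  by_cases hν : ν (Set.Ioi 0) = 0
  · -- trivial subordinator
    have hν0 : ν = 0 := by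
      have huniv : ν Set.univ = 0 := by
        have hu : (Set.univ : Set ℝ) = Set.Iic 0 ∪ Set.Ioi 0 := by
          ext x; simp [le_or_gt]
        rw [hu]
        have hle := measure_union_le (μ := ν) (Set.Iic 0) (Set.Ioi 0)
        rw [hlev.supp, hν] at hle
        exact le_antisymm (by simpa using hle) zero_le
      exact Measure.measure_univ_eq_zero.mp huniv
    have hφ : laplaceExp ν = fun _ => 0 := by
      funext u; rw [laplaceExp, hν0]; simp
    have hH : ∀ u, Hfun ν u = 0 := by
      intro u; rw [Hfun, hφ]; simp
    have hmu1 : (μ t (Set.Iic s)).toReal = 1 := by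
      have hint1 : Integrable (fun x : ℝ => 1 - Real.exp (-(1 * x))) (μ t) :=
        (integrable_const 1).sub (integ_mu_exp hsub ht one_pos.le)
      have hzero : ∫ x, (1 - Real.exp (-(1 * x))) ∂(μ t) = 0 := by
        rw [integral_sub (integrable_const 1) (integ_mu_exp hsub ht one_pos.le),
          integral_const, hsub.laplace t 1 ht one_pos.le, hφ]
        simp
      have hae0 : ∀ᵐ x ∂(μ t), 1 - Real.exp (-(1 * x)) = 0 := by
        have hnn : 0 ≤ᵐ[μ t] fun x : ℝ => 1 - Real.exp (-(1 * x)) := by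
          filter_upwards [mu_ae_nonneg hsub ht] with x hx
          have hle1 : Real.exp (-(1 * x)) ≤ 1 := Real.exp_le_one_iff.2 (by linarith)
          simp only [Pi.zero_apply]
          linarith
        have := (integral_eq_zero_iff_of_nonneg_ae hnn hint1).mp hzero
        filter_upwards [this] with x hx
        simpa using hx
      have haes : ∀ᵐ x ∂(μ t), x ∈ Set.Iic s := by
        filter_upwards [hae0] with x hx
        have hxe : Real.exp (-(1 * x)) = 1 := by linarith
        have hx0 : -(1 * x) = 0 := by
          apply Real.exp_injective
          rw [hxe, Real.exp_zero]
        simp only [Set.mem_Iic]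
        nlinarith
      have hcompl : μ t (Set.Iic s)ᶜ = 0 := by
        rw [MeasureTheory.ae_iff] at haes
        exact haes
      have hone : μ t (Set.Iic s) = 1 := by
        have hcm := measure_compl (measurableSet_Iic (a := s)) (measure_ne_top (μ t) _)
        rw [hcompl, measure_univ] at hcm
        have h1le : (1:ℝ≥0∞) ≤ μ t (Set.Iic s) := by
          rwa [eq_comm, tsub_eq_zero_iff_le] at hcm
        exact le_antisymm prob_le_one h1le
      rw [hone, ENNReal.toReal_one]
    rw [hH, hmu1]
    constructor
    · simp only [mul_zero, neg_zero, Real.exp_zero, mul_one]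
      exact Real.exp_le_one_iff.2 (by norm_num)
    · simp only [mul_zero, neg_zero, Real.exp_zero, mul_one]
      exact Real.one_le_exp (by norm_num)
  · -- nontrivial subordinator
    have hQpos : ∀ l : ℝ, 0 < l → 0 < Qf ν l := by
      intro l hl
      rcases lt_or_eq_of_le (Qf_nonneg hlev l) with h | h
      · exact h
      · exfalso
        have hint := integ_x2exp hlev hl
        have hnn : 0 ≤ᵐ[ν] fun x : ℝ => x ^ 2 * Real.exp (-(l * x)) := by
          filter_upwards [ae_pos hlev] with x hx; positivity
        have hae := (integral_eq_zero_iff_of_nonneg_ae hnn hint).mp h.symm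
        have hfalse : ∀ᵐ x ∂ν, False := by
          filter_upwards [ae_pos hlev, hae] with x hx hx0
          have hpos : (0:ℝ) < x ^ 2 * Real.exp (-(l * x)) := by positivity
          simp only [Pi.zero_apply] at hx0
          linarith
        rw [MeasureTheory.ae_iff] at hfalse
        simp only [not_false_eq_true, Set.setOf_true] at hfalse
        exact hν (le_antisymm (hfalse ▸ measure_mono (Set.subset_univ _)) zero_le)
    set σ' : ℝ := σ t s with hσ'def
    have hbr := hσ t s ht hs
    -- unified facts
    have hfacts : (0 ≤ σ') ∧ (0 ≤ t * Hfun ν σ') ∧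
        (∀ lb : ℝ, σ' < lb → ∃ a, 0 < a ∧ a ≤ lb ∧
          t * Htf ν a ≤ t * Hfun ν σ' + 1 ∧ t * Pf ν a ≤ s) ∧
        (∃ l, σ' < l ∧ 0 < l ∧ t * Htf ν l ≤ t * Hfun ν σ' + 1) ∧
        ((μ t (Set.Iic s)).toReal ≤ Real.exp (-(t * Hfun ν σ'))) := by
      by_cases hex : ∃ lam : ℝ, 0 < lam ∧ s / t < deriv (laplaceExp ν) lam
      · obtain ⟨hσpos, hσeq⟩ := hbr.1 hex
        rw [← hσ'def] at hσpos hσeq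
        have hderiv : deriv (laplaceExp ν) σ' = Pf ν σ' := deriv_laplaceExp hlev hσpos
        have hPs : t * Pf ν σ' = s := by
          rw [← hderiv, hσeq]; field_simp
        have hHfun_eq : Hfun ν σ' = Htf ν σ' := by
          rw [Hfun, Htf, hderiv]
        have hH0 : 0 ≤ t * Hfun ν σ' := by
          rw [hHfun_eq]
          exact mul_nonneg ht.le (Htf_nonneg hlev hσpos)
        refine ⟨hσpos.le, hH0, ?_, ?_, ?_⟩
        · intro lb hlb
          exact ⟨σ', hσpos, hlb.le, by rw [hHfun_eq]; linarith, le_of_eq hPs⟩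
        · -- continuity of Htf at σ'
          have hseq : Tendsto (fun n : ℕ => σ' + 1 / ((n : ℝ) + 1)) atTop (𝓝 σ') := by
            have := tendsto_const_nhds (x := σ') (f := atTop (α := ℕ))
            have h2 := this.add tendsto_one_div_add_atTop_nhds_zero_nat
            simpa using h2
          have hcont := (continuousAt_Htf hlev hσpos).tendsto.comp hseq
          have hcont2 : Tendsto (fun n : ℕ => t * Htf ν (σ' + 1 / ((n : ℝ) + 1))) atTop
              (𝓝 (t * Htf ν σ')) := hcont.const_mul t
          have hev : ∀ᶠ n : ℕ in atTop,
              t * Htf ν (σ' + 1 / ((n : ℝ) + 1)) < t * Htf ν σ' + 1 :=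
            hcont2.eventually_lt_const (by linarith)
          obtain ⟨n, hn⟩ := hev.exists
          have hfr : (0:ℝ) < 1 / ((n : ℝ) + 1) := by positivity
          refine ⟨σ' + 1 / ((n : ℝ) + 1), lt_add_of_pos_right σ' hfr, by linarith, ?_⟩
          rw [hHfun_eq]
          linarith
        · -- upper bound
          have hup := upper_est hsub ht (l := σ') hσpos.le hs
          have hexpeq : σ' * s - t * laplaceExp ν σ' = -(t * Hfun ν σ') := by
            rw [Hfun, hderiv]
            have : σ' * (t * Pf ν σ') = σ' * s := by rw [hPs]
            nlinarith [this]
          rwa [hexpeq] at hup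
      · have hforall : ∀ lam : ℝ, 0 < lam → deriv (laplaceExp ν) lam ≤ s / t := by
          intro lam hlam
          by_contra hcon
          exact hex ⟨lam, hlam, lt_of_not_ge hcon⟩
        have hσ0 : σ' = 0 := by rw [hσ'def]; exact hbr.2 hforall
        have hlap0 : laplaceExp ν 0 = 0 := by
          rw [laplaceExp]; simp
        have hHfun0 : Hfun ν σ' = 0 := by
          rw [hσ0, Hfun, hlap0]; ring
        have hPle : ∀ l : ℝ, 0 < l → t * Pf ν l ≤ s := by
          intro l hl
          have h1 := hforall l hl
          rw [deriv_laplaceExp hlev hl] at h1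
          calc t * Pf ν l ≤ t * (s / t) := by nlinarith
          _ = s := by field_simp
        have ht1 : Tendsto (fun n : ℕ => t * Htf ν (1 / ((n:ℝ)+1))) atTop (𝓝 (t * 0)) :=
          (tendsto_Htf_zero hlev).const_mul t
        rw [mul_zero] at ht1
        have e1 : ∀ᶠ n : ℕ in atTop, t * Htf ν (1 / ((n:ℝ)+1)) < 1 :=
          ht1.eventually_lt_const one_pos
        refine ⟨le_of_eq hσ0.symm, by rw [hHfun0]; simp, ?_, ?_, ?_⟩
        · intro lb hlb
          have hlb0 : 0 < lb := by rw [hσ0] at hlb; exact hlb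
          have e2 : ∀ᶠ n : ℕ in atTop, 1 / ((n:ℝ)+1) < lb :=
            tendsto_one_div_add_atTop_nhds_zero_nat.eventually_lt_const hlb0
          obtain ⟨n, hn1, hn2⟩ := (e1.and e2).exists
          refine ⟨1 / ((n:ℝ)+1), by positivity, hn2.le, ?_, hPle _ (by positivity)⟩
          rw [hHfun0]
          linarith
        · obtain ⟨n, hn1⟩ := e1.exists
          refine ⟨1 / ((n:ℝ)+1), by rw [hσ0]; positivity, by positivity, ?_⟩
          rw [hHfun0]
          linarith
        · rw [hHfun0, mul_zero, neg_zero, Real.exp_zero]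
          have h1 : (μ t (Set.Iic s)).toReal ≤ (1:ℝ≥0∞).toReal :=
            ENNReal.toReal_mono ENNReal.one_ne_top prob_le_one
          simpa using h1
    obtain ⟨hσnn, hH0, key_aux, key_aux2, hupper⟩ := hfacts
    constructor
    · -- LOWER BOUND
      have final_step : ∀ hb : ℝ, hb ≤ 2 * (t * Hfun ν σ') + 10 →
          (3/4) * Real.exp (-(2 * hb) - 2) ≤ (μ t (Set.Iic s)).toReal →
          Real.exp (-23) * Real.exp (-(4 * (t * Hfun ν σ'))) ≤ (μ t (Set.Iic s)).toReal := by
        intro hb hble hest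
        refine le_trans ?_ hest
        calc Real.exp (-23) * Real.exp (-(4 * (t * Hfun ν σ')))
            = Real.exp (-(2 * (2 * (t * Hfun ν σ') + 10)) - 3) := by
              rw [← Real.exp_add]; congr 1; ring
        _ ≤ Real.exp (-(2 * hb) - 3) := Real.exp_le_exp.2 (by linarith)
        _ = Real.exp (-1 : ℝ) * Real.exp (-(2 * hb) - 2) := by
              rw [← Real.exp_add]; congr 1; ring
        _ ≤ (3/4) * Real.exp (-(2 * hb) - 2) :=
              mul_le_mul_of_nonneg_right hexp_neg_one (Real.exp_pos _).le
      by_cases hca : ∀ l : ℝ, σ' < l → 2 * Real.sqrt (t * Qf ν l) ≤ s - t * Pf ν l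
      · -- case (a)
        obtain ⟨l, hσl, hl0, hHl⟩ := key_aux2
        have hcond : t * Pf ν l + 2 * Real.sqrt (t * Qf ν l) ≤ s := by
          have := hca l hσl; linarith
        have hest := main_est2 hsub ht hl0 (hQpos l hl0) hcond
        refine final_step (t * Htf ν l) (by linarith) hest
      · -- case (b)
        push_neg at hca
        obtain ⟨l₁, hl₁σ, hl₁gt⟩ := hca
        have hl₁0 : 0 < l₁ := lt_of_le_of_lt hσnn hl₁σ
        have hPlim : ∀ᶠ u : ℝ in atTop, t * Pf ν u < s / 2 := by
          have h1 : Tendsto (fun u => t * Pf ν u) atTop (𝓝 (t * 0)) :=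
            (tendsto_Pf_atTop hlev).const_mul t
          rw [mul_zero] at h1
          exact h1.eventually_lt_const (by linarith)
        have hQlim : ∀ᶠ u : ℝ in atTop, 2 * Real.sqrt (t * Qf ν u) < s / 2 := by
          have h1 : Tendsto (fun u => t * Qf ν u) atTop (𝓝 (t * 0)) :=
            (tendsto_Qf_atTop hlev).const_mul t
          rw [mul_zero] at h1
          have h2 : Tendsto (fun u => Real.sqrt (t * Qf ν u)) atTop (𝓝 (Real.sqrt 0)) :=
            (Real.continuous_sqrt.tendsto _).comp h1
          rw [Real.sqrt_zero] at h2
          have h3 := h2.const_mul (2:ℝ)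
          rw [mul_zero] at h3
          exact h3.eventually_lt_const (by linarith)
        obtain ⟨Λ, hΛ⟩ := ((hPlim.and hQlim).and (eventually_ge_atTop (l₁ + 1))).exists
        obtain ⟨⟨hΛP, hΛQ⟩, hΛge⟩ := hΛ
        have hl₁Λ : l₁ ≤ Λ := by linarith
        set k : ℝ → ℝ := fun u => (s - t * Pf ν u) - 2 * Real.sqrt (t * Qf ν u) with hk
        have hcont : ContinuousOn k (Set.Icc l₁ Λ) := by
          intro u hu
          have hu0 : 0 < u := lt_of_lt_of_le hl₁0 hu.1
          have c1 : ContinuousAt k u := by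
            refine ContinuousAt.sub ?_ ?_
            · exact continuousAt_const.sub (continuousAt_const.mul (continuousAt_Pf hlev hu0))
            · exact continuousAt_const.mul
                ((Real.continuous_sqrt.continuousAt).comp
                  (continuousAt_const.mul (continuousAt_Qf hlev hu0)))
          exact c1.continuousWithinAt
        have hkl₁ : k l₁ < 0 := by
          simp only [hk]
          linarith
        have hkΛ : 0 ≤ k Λ := by
          simp only [hk]
          linarith
        have hivt := intermediate_value_Icc hl₁Λ hcont
        obtain ⟨lb, hlbmem, hlbeq⟩ := hivt ⟨hkl₁.le, hkΛ⟩
        have hlb0 : 0 < lb := lt_of_lt_of_le hl₁0 hlbmem.1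
        have hlbσ : σ' < lb := lt_of_lt_of_le hl₁σ hlbmem.1
        have hglb : 2 * Real.sqrt (t * Qf ν lb) = s - t * Pf ν lb := by
          simp only [hk] at hlbeq
          linarith
        have hcond : t * Pf ν lb + 2 * Real.sqrt (t * Qf ν lb) ≤ s := by linarith
        obtain ⟨a, ha0, halb, haH, haP⟩ := key_aux lb hlbσ
        have hmono := Htf_mono_bound hlev ha0 halb
        have hbar0 : 0 ≤ t * Htf ν lb := mul_nonneg ht.le (Htf_nonneg hlev hlb0)
        have hth : lb ^ 2 * (t * Qf ν lb) ≤ 2 * (t * Htf ν lb) := by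
          have hq2 := sqQ_le_two hlev hlb0
          have h2 : lb ^ 2 * Qf ν lb ≤ 2 * Htf ν lb := by simpa [Htf] using hq2
          nlinarith
        have hsqrt2 : 2 * (lb * Real.sqrt (t * Qf ν lb)) ≤ (t * Htf ν lb) / 2 + 4 := by
          have h1 : lb * Real.sqrt (t * Qf ν lb) = Real.sqrt (lb ^ 2 * (t * Qf ν lb)) := by
            rw [Real.sqrt_mul (sq_nonneg lb), Real.sqrt_sq hlb0.le]
          have h2 : Real.sqrt (lb ^ 2 * (t * Qf ν lb))
              ≤ Real.sqrt ((((t * Htf ν lb) / 4 + 2)) ^ 2) := by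
            apply Real.sqrt_le_sqrt
            nlinarith [sq_nonneg ((t * Htf ν lb) / 4 - 2), hth]
          rw [Real.sqrt_sq (by linarith : (0:ℝ) ≤ (t * Htf ν lb) / 4 + 2)] at h2
          rw [h1]
          linarith
        have hbarle : t * Htf ν lb ≤ 2 * (t * Hfun ν σ') + 10 := by
          have hstep : t * Htf ν lb ≤ t * Htf ν a + lb * (t * Pf ν a - t * Pf ν lb) := by
            nlinarith [hmono, ht.le]
          have hstep2 : lb * (t * Pf ν a - t * Pf ν lb) ≤ lb * (s - t * Pf ν lb) := by
            apply mul_le_mul_of_nonneg_left _ hlb0.le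
            linarith
          have hstep3 : lb * (s - t * Pf ν lb) = 2 * (lb * Real.sqrt (t * Qf ν lb)) := by
            rw [← hglb]; ring
          have := hsqrt2
          linarith
        have hest := main_est2 hsub ht hlb0 (hQpos lb hlb0) hcond
        exact final_step (t * Htf ν lb) hbarle hest
    · -- UPPER BOUND
      calc (μ t (Set.Iic s)).toReal ≤ Real.exp (-(t * Hfun ν σ')) := hupper
      _ ≤ Real.exp 1 * Real.exp (-(t * Hfun ν σ')) := by
          nlinarith [Real.one_le_exp (by norm_num : (0:ℝ) ≤ 1), Real.exp_pos (-(t * Hfun ν σ'))]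


/-- Proposition 2.3: two-sided estimate for the left tail of the subordinator:
`c₁ exp(-c₂ t H(σ(t,s))) ≤ P(S_t ≤ s) ≤ e · exp(-t H(σ(t,s)))` for all `t,s > 0`. -/
theorem left_tail_estimate
    (ν : Measure ℝ) (μ : ℝ → Measure ℝ) (hsub : IsSubordinatorLaw ν μ)
    (σ : ℝ → ℝ → ℝ) (hσ : IsSigmaFun ν σ) :
    ∃ c₁ c₂ : ℝ, 0 < c₁ ∧ 0 < c₂ ∧
      ∀ t s : ℝ, 0 < t → 0 < s →
        c₁ * Real.exp (-(c₂ * (t * Hfun ν (σ t s)))) ≤ (μ t (Set.Iic s)).toReal ∧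
        (μ t (Set.Iic s)).toReal ≤ Real.exp 1 * Real.exp (-(t * Hfun ν (σ t s))) := by
  exact left_tail_estimate_aux ν μ hsub σ hσ
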